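/- Let C be an ∞-category (or 1-category) admitting finite coproducts, with initial object ∅, and let X, Y be objects. For any two maps g₀, g₁ : X → Y, the induced maps of Čech conerves X^• ⇉ Y^• (where Xⁿ = (n+1)-fold coproduct of X, Yⁿ = (n+1)-fold coproduct of Y) are simplicially homotopic; the homotopy is functorial in g₀ and g₁, and is the constant homotopy when X = Y and g₀ = g₁. -/

import Mathlib

open CategoryTheory CategoryTheory.Limits

universe v u

variable {C : Type u} [Category.{v} C] [HasFiniteCoproducts C]

/-- The `n`-th object of the Čech conerve of an object `X` (i.e. of `∅ → X`):
the `(n+1)`-fold coproduct `X^{⊔ (n+1)}`. -/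
noncomputable def cechConerveObj (X : C) (n : SimplexCategory) : C :=
  ∐ fun _ : Fin (n.len + 1) => X

/-- The cosimplicial structure maps of the Čech conerve of `X`. -/
noncomputable def cechConerveMap (X : C) {m n : SimplexCategory} (α : m ⟶ n) :
    cechConerveObj X m ⟶ cechConerveObj X n :=
  Sigma.desc fun i => Sigma.ι (fun _ : Fin (n.len + 1) => X) (α.toOrderHom i)

/-- The map of Čech conerves induced by a map `g : X ⟶ Y`. -/
noncomputable def cechConerveHom {X Y : C} (g : X ⟶ Y) (n : SimplexCategory) :
    cechConerveObj X n ⟶ cechConerveObj Y n :=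
  Sigma.desc fun i => g ≫ Sigma.ι (fun _ : Fin (n.len + 1) => Y) i

/-- A *simplicial homotopy* between the maps of Čech conerves induced by `g₀, g₁ : X ⟶ Y`:
a map `h : δ*(X^•) → δ*(Y^•)` of `Δ_{/[1]}`-shaped diagrams (componentwise: for each `n`
and each `α : n → [1]` a map `h n α`, natural in `(n, α)`), restricting to the induced maps
`g₀^•`, `g₁^•` at the two vertices of `[1]`. -/
structure CechConerveHomotopy {X Y : C} (g₀ g₁ : X ⟶ Y) where
  h : ∀ (n : SimplexCategory) (_ : n ⟶ SimplexCategory.mk 1),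
    cechConerveObj X n ⟶ cechConerveObj Y n
  naturality : ∀ {m n : SimplexCategory} (β : m ⟶ n) (α : n ⟶ SimplexCategory.mk 1),
    cechConerveMap X β ≫ h n α = h m (β ≫ α) ≫ cechConerveMap Y β
  h_zero : ∀ n, h n (SimplexCategory.const n (SimplexCategory.mk 1) 0) = cechConerveHom g₀ n
  h_one : ∀ n, h n (SimplexCategory.const n (SimplexCategory.mk 1) 1) = cechConerveHom g₁ n

/-- Let `C` be a category admitting finite coproducts, `X, Y` objects and
`g₀, g₁ : X ⟶ Y` two maps.  Then the induced maps of Čech conerves `X^• ⇉ Y^•` are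
simplicially homotopic; moreover the homotopy can be chosen functorially in `(g₀, g₁)`
(it is compatible with all commuting squares), and to be the constant homotopy (induced by
`g` itself) when `g₀ = g₁ = g` — in particular constant when `X = Y` and `g₀ = g₁`. -/

noncomputable def cechHtpy {X Y : C} (g₀ g₁ : X ⟶ Y) (n : SimplexCategory)
    (α : n ⟶ SimplexCategory.mk 1) : cechConerveObj X n ⟶ cechConerveObj Y n :=
  Sigma.desc fun i => (if α.toOrderHom i = 0 then g₀ else g₁) ≫
    Sigma.ι (fun _ : Fin (n.len + 1) => Y) i

theorem stmt_15 :
    ∃ H : ∀ (X Y : C) (g₀ g₁ : X ⟶ Y), CechConerveHomotopy g₀ g₁,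
      (∀ (X Y : C) (g : X ⟶ Y) (n : SimplexCategory) (α : n ⟶ SimplexCategory.mk 1),
        (H X Y g g).h n α = cechConerveHom g n) ∧
      (∀ (X Y X' Y' : C) (g₀ g₁ : X ⟶ Y) (g₀' g₁' : X' ⟶ Y') (a : X ⟶ X') (b : Y ⟶ Y'),
        g₀ ≫ b = a ≫ g₀' → g₁ ≫ b = a ≫ g₁' →
        ∀ (n : SimplexCategory) (α : n ⟶ SimplexCategory.mk 1),
          (H X Y g₀ g₁).h n α ≫ cechConerveHom b n =
            cechConerveHom a n ≫ (H X' Y' g₀' g₁').h n α) := by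
  
  refine ⟨fun X Y g₀ g₁ => ⟨cechHtpy g₀ g₁, ?_, ?_, ?_⟩, ?_, ?_⟩
  · intro m n β α
    refine Sigma.hom_ext _ _ fun i => ?_
    simp only [cechHtpy, cechConerveMap, colimit.ι_desc_assoc, Cofan.mk_pt, Cofan.mk_ι_app,
      colimit.ι_desc, Category.assoc]
    erw [Sigma.ι_desc_assoc, Sigma.ι_desc, Sigma.ι_desc_assoc, Category.assoc, Sigma.ι_desc]
    rfl
  · intro n
    refine Sigma.hom_ext _ _ fun i => ?_
    simp [cechHtpy, cechConerveHom, SimplexCategory.const]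
  · intro n
    refine Sigma.hom_ext _ _ fun i => ?_
    simp only [cechHtpy, cechConerveHom, colimit.ι_desc, Cofan.mk_pt, Cofan.mk_ι_app]
    rw [show (SimplexCategory.Hom.toOrderHom (n.const (SimplexCategory.mk 1) 1)) i = 1 from
      rfl, if_neg (by decide)]
  · intro X Y g n α
    refine Sigma.hom_ext _ _ fun i => ?_
    simp [cechHtpy, cechConerveHom]
  · intro X Y X' Y' g₀ g₁ g₀' g₁' a b h0 h1 n α
    refine Sigma.hom_ext _ _ fun i => ?_
    simp only [cechHtpy, cechConerveHom, colimit.ι_desc_assoc, Cofan.mk_pt, Cofan.mk_ι_app,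
      colimit.ι_desc, Category.assoc]
    erw [Sigma.ι_desc_assoc, Sigma.ι_desc_assoc, Category.assoc, Sigma.ι_desc, Category.assoc, Sigma.ι_desc]
    split
    · erw [reassoc_of% h0]
    · erw [reassoc_of% h1]
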